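/- arXiv:1208.4567 — 2 statements merged into one kernel-verified Lean document; each statement's English description precedes it below -/
import Mathlib

section
/- The derivative of the complete elliptic integral of the first kind satisfies dK/dk = E(k)/(k(1-k²)) - K(k)/k for 0 < k < 1. -/
open Real Filter

/-- Complete elliptic integral of the first kind, `K(k) = ∫₀^{π/2} dt/√(1-k² sin² t)`. -/
noncomputable def ellipticK (k : ℝ) : ℝ :=
  ∫ t in (0:ℝ)..(π/2), 1 / Real.sqrt (1 - k^2 * Real.sin t ^ 2)

/-- Complete elliptic integral of the second kind, `E(k) = ∫₀^{π/2} √(1-k² sin² t) dt`. -/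
noncomputable def ellipticE (k : ℝ) : ℝ :=
  ∫ t in (0:ℝ)..(π/2), Real.sqrt (1 - k^2 * Real.sin t ^ 2)


open MeasureTheory intervalIntegral Metric

private lemma delta_pos' {x : ℝ} (hx : x^2 < 1) (t : ℝ) :
    0 < 1 - x^2 * Real.sin t ^ 2 := by
  nlinarith [Real.sin_sq_le_one t, sq_nonneg x, sq_nonneg (Real.sin t)]

/-- derivative of the integrand in the parameter -/
private lemma hasDerivAt_param (t : ℝ) {x : ℝ} (hx : x^2 < 1) :
    HasDerivAt (fun y : ℝ => 1 / Real.sqrt (1 - y^2 * Real.sin t ^ 2))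
      (x * Real.sin t ^ 2 /
        (Real.sqrt (1 - x^2 * Real.sin t ^ 2) * (1 - x^2 * Real.sin t ^ 2))) x := by
  have hd : 0 < 1 - x^2 * Real.sin t ^ 2 := delta_pos' hx t
  have hs : 0 < Real.sqrt (1 - x^2 * Real.sin t ^ 2) := Real.sqrt_pos.2 hd
  have h1 : HasDerivAt (fun y : ℝ => 1 - y^2 * Real.sin t ^ 2)
      (-(2 * x * Real.sin t ^ 2)) x := by
    have := ((hasDerivAt_pow 2 x).mul_const (Real.sin t ^ 2)).const_sub 1
    convert this using 1
    all_goals first | rfl | norm_num | ring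
  have h2 := h1.sqrt hd.ne'
  have h3 := h2.inv hs.ne'
  have h4 : HasDerivAt (fun y : ℝ => 1 / Real.sqrt (1 - y^2 * Real.sin t ^ 2))
      (-(-(2 * x * Real.sin t ^ 2) / (2 * Real.sqrt (1 - x^2 * Real.sin t ^ 2))) /
        Real.sqrt (1 - x^2 * Real.sin t ^ 2) ^ 2) x := by
    simpa [one_div, Pi.inv_def] using h3
  convert h4 using 1
  rw [Real.sq_sqrt hd.le]
  field_simp

private lemma hasDerivAt_aux {k : ℝ} (hk : 0 < k) (hk1 : k < 1) (t : ℝ) :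
    HasDerivAt (fun s : ℝ =>
        -(k / (1 - k^2)) * (Real.sin s * Real.cos s / Real.sqrt (1 - k^2 * Real.sin s ^ 2)))
      (k * Real.sin t ^ 2 /
          (Real.sqrt (1 - k^2 * Real.sin t ^ 2) * (1 - k^2 * Real.sin t ^ 2))
        - Real.sqrt (1 - k^2 * Real.sin t ^ 2) / (k * (1 - k^2))
        + 1 / (k * Real.sqrt (1 - k^2 * Real.sin t ^ 2))) t := by
  have hk2 : k^2 < 1 := by nlinarith
  have hd : 0 < 1 - k^2 * Real.sin t ^ 2 := by
    nlinarith [Real.sin_sq_le_one t, sq_nonneg (Real.sin t)]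
  have hs : 0 < Real.sqrt (1 - k^2 * Real.sin t ^ 2) := Real.sqrt_pos.2 hd
  have hu : HasDerivAt (fun s : ℝ => Real.sin s * Real.cos s)
      (Real.cos t * Real.cos t + Real.sin t * (-Real.sin t)) t :=
    (Real.hasDerivAt_sin t).mul (Real.hasDerivAt_cos t)
  have hdd : HasDerivAt (fun s : ℝ => 1 - k^2 * Real.sin s ^ 2)
      (-(k^2 * (2 * Real.sin t * Real.cos t))) t := by
    have := (((Real.hasDerivAt_sin t).pow 2).const_mul (k^2)).const_sub 1
    convert this using 1
    all_goals first | rfl | (norm_num; ring) | ring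
  have hv := hdd.sqrt hd.ne'
  have hq := hu.div hv hs.ne'
  have := hq.const_mul (-(k / (1 - k^2)))
  convert this using 1
  all_goals try rfl
  have hr2 : Real.sqrt (1 - k^2 * Real.sin t ^ 2) ^ 2 = 1 - k^2 * Real.sin t ^ 2 :=
    Real.sq_sqrt hd.le
  have hc : Real.cos t ^ 2 = 1 - Real.sin t ^ 2 := Real.cos_sq' t
  set r := Real.sqrt (1 - k^2 * Real.sin t ^ 2) with hr
  set S := Real.sin t
  set C := Real.cos t
  have h1k : (1:ℝ) - k^2 ≠ 0 := by nlinarith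
  field_simp
  rw [hr2, hc]; ring

theorem dK_dk (k : ℝ) (hk : 0 < k) (hk1 : k < 1) :
    HasDerivAt ellipticK
      (ellipticE k / (k * (1 - k^2)) - ellipticK k / k) k := by
  have hk2 : k^2 < 1 := by nlinarith
  have hdp : ∀ t : ℝ, 0 < 1 - k^2 * Real.sin t ^ 2 := fun t => delta_pos' hk2 t
  have hsp : ∀ t : ℝ, 0 < Real.sqrt (1 - k^2 * Real.sin t ^ 2) :=
    fun t => Real.sqrt_pos.2 (hdp t)
  have hb1 : (1 + k) / 2 < 1 := by linarith
  have hb0 : (0:ℝ) < (1 + k) / 2 := by linarith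
  have hm0 : (0:ℝ) < 1 - ((1 + k) / 2)^2 := by nlinarith
  set m : ℝ := 1 - ((1 + k) / 2)^2 with hm
  have hsqcont : ∀ x : ℝ, Continuous fun t : ℝ => Real.sqrt (1 - x^2 * Real.sin t ^ 2) := by
    intro x; fun_prop
  have hF'cont : Continuous fun t : ℝ => k * Real.sin t ^ 2 /
      (Real.sqrt (1 - k^2 * Real.sin t ^ 2) * (1 - k^2 * Real.sin t ^ 2)) := by
    apply Continuous.div (by fun_prop) ((hsqcont k).mul (by fun_prop))
    intro t
    exact (mul_pos (hsp t) (hdp t)).ne'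
  -- step 1: differentiate under the integral sign
  have step1 : HasDerivAt ellipticK
      (∫ t in (0:ℝ)..(π/2), k * Real.sin t ^ 2 /
        (Real.sqrt (1 - k^2 * Real.sin t ^ 2) * (1 - k^2 * Real.sin t ^ 2))) k := by
    have hball : ∀ x ∈ ball k ((1 - k)/2), x^2 < 1 ∧ |x| ≤ (1 + k) / 2 := by
      intro x hx
      rw [mem_ball, Real.dist_eq, abs_lt] at hx
      constructor
      · nlinarith [hx.1, hx.2]
      · rw [abs_le]; constructor <;> nlinarith [hx.1, hx.2]
    have := intervalIntegral.hasDerivAt_integral_of_dominated_loc_of_deriv_le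
      (𝕜 := ℝ) (μ := volume)
      (F := fun x t => 1 / Real.sqrt (1 - x^2 * Real.sin t ^ 2))
      (F' := fun x t => x * Real.sin t ^ 2 /
        (Real.sqrt (1 - x^2 * Real.sin t ^ 2) * (1 - x^2 * Real.sin t ^ 2)))
      (x₀ := k) (a := 0) (b := π/2)
      (bound := fun _ => ((1 + k) / 2) / (Real.sqrt m * m))
      (ball_mem_nhds k (show (0:ℝ) < (1 - k)/2 by linarith)) ?_ ?_ ?_ ?_ ?_ ?_
    · exact this.2
    · filter_upwards [ball_mem_nhds k (show (0:ℝ) < (1 - k)/2 by linarith)] with x hx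
      have hx2 := (hball x hx).1
      have : Continuous fun t : ℝ => 1 / Real.sqrt (1 - x^2 * Real.sin t ^ 2) :=
        continuous_const.div (hsqcont x)
          fun t => (Real.sqrt_pos.2 (delta_pos' hx2 t)).ne'
      exact this.aestronglyMeasurable.restrict
    · apply Continuous.intervalIntegrable
      exact continuous_const.div (hsqcont k) fun t => (hsp t).ne'
    · exact hF'cont.aestronglyMeasurable.restrict
    · filter_upwards with t _ x hx
      obtain ⟨hx2, hxb⟩ := hball x hx
      have hΔm : m ≤ 1 - x^2 * Real.sin t ^ 2 := by
        have hxx : x^2 ≤ ((1 + k) / 2)^2 := by nlinarith [sq_abs x, abs_nonneg x]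
        rw [hm]
        nlinarith [Real.sin_sq_le_one t, sq_nonneg (Real.sin t)]
      have hΔ : 0 < 1 - x^2 * Real.sin t ^ 2 := lt_of_lt_of_le hm0 hΔm
      have hden : Real.sqrt m * m ≤
          Real.sqrt (1 - x^2 * Real.sin t ^ 2) * (1 - x^2 * Real.sin t ^ 2) := by
        have := Real.sqrt_le_sqrt hΔm
        have hsm : (0:ℝ) ≤ Real.sqrt m := Real.sqrt_nonneg m
        nlinarith [this, hΔm, hm0]
      rw [Real.norm_eq_abs, abs_div]
      have hnum : |x * Real.sin t ^ 2| ≤ (1 + k) / 2 := by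
        rw [abs_mul]
        calc |x| * |Real.sin t ^ 2| ≤ ((1 + k) / 2) * 1 := by
              apply mul_le_mul hxb ?_ (abs_nonneg _) hb0.le
              rw [abs_of_nonneg (sq_nonneg _)]
              exact Real.sin_sq_le_one t
          _ = (1 + k) / 2 := mul_one _
      rw [abs_of_pos (mul_pos (Real.sqrt_pos.2 hΔ) hΔ)]
      exact div_le_div₀ hb0.le hnum (mul_pos (Real.sqrt_pos.2 hm0) hm0) hden
    · exact intervalIntegrable_const
    · filter_upwards with t _ x hx
      exact hasDerivAt_param t (hball x hx).1
  -- step 2: compute the integral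
  have h1k : k * (1 - k^2) ≠ 0 := (mul_pos hk (by nlinarith : (0:ℝ) < 1 - k^2)).ne'
  have hAcont : Continuous fun t : ℝ =>
      Real.sqrt (1 - k^2 * Real.sin t ^ 2) / (k * (1 - k^2)) := (hsqcont k).div_const _
  have hBcont : Continuous fun t : ℝ => 1 / (k * Real.sqrt (1 - k^2 * Real.sin t ^ 2)) :=
    continuous_const.div (continuous_const.mul (hsqcont k))
      fun t => (mul_pos hk (hsp t)).ne'
  have hGcont : Continuous fun t : ℝ =>
      k * Real.sin t ^ 2 /
        (Real.sqrt (1 - k^2 * Real.sin t ^ 2) * (1 - k^2 * Real.sin t ^ 2))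
      - Real.sqrt (1 - k^2 * Real.sin t ^ 2) / (k * (1 - k^2))
      + 1 / (k * Real.sqrt (1 - k^2 * Real.sin t ^ 2)) :=
    (hF'cont.sub hAcont).add hBcont
  have hG0 : (∫ t in (0:ℝ)..(π/2),
      (k * Real.sin t ^ 2 /
        (Real.sqrt (1 - k^2 * Real.sin t ^ 2) * (1 - k^2 * Real.sin t ^ 2))
      - Real.sqrt (1 - k^2 * Real.sin t ^ 2) / (k * (1 - k^2))
      + 1 / (k * Real.sqrt (1 - k^2 * Real.sin t ^ 2)))) = 0 := by
    rw [intervalIntegral.integral_eq_sub_of_hasDerivAt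
      (fun t _ => hasDerivAt_aux hk hk1 t) (hGcont.intervalIntegrable _ _)]
    simp
  have hA : (∫ t in (0:ℝ)..(π/2),
      Real.sqrt (1 - k^2 * Real.sin t ^ 2) / (k * (1 - k^2)))
      = ellipticE k / (k * (1 - k^2)) := by
    rw [intervalIntegral.integral_div]; rfl
  have hB : (∫ t in (0:ℝ)..(π/2),
      1 / (k * Real.sqrt (1 - k^2 * Real.sin t ^ 2))) = ellipticK k / k := by
    have : (fun t : ℝ => 1 / (k * Real.sqrt (1 - k^2 * Real.sin t ^ 2)))
        = fun t : ℝ => (1 / Real.sqrt (1 - k^2 * Real.sin t ^ 2)) / k := by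
      funext t; rw [div_div, mul_comm]
    rw [this, intervalIntegral.integral_div]; rfl
  have key : (∫ t in (0:ℝ)..(π/2), k * Real.sin t ^ 2 /
        (Real.sqrt (1 - k^2 * Real.sin t ^ 2) * (1 - k^2 * Real.sin t ^ 2)))
      = ellipticE k / (k * (1 - k^2)) - ellipticK k / k := by
    have hsplit : (∫ t in (0:ℝ)..(π/2), k * Real.sin t ^ 2 /
          (Real.sqrt (1 - k^2 * Real.sin t ^ 2) * (1 - k^2 * Real.sin t ^ 2)))
        = (∫ t in (0:ℝ)..(π/2),
            (k * Real.sin t ^ 2 /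
              (Real.sqrt (1 - k^2 * Real.sin t ^ 2) * (1 - k^2 * Real.sin t ^ 2))
            - Real.sqrt (1 - k^2 * Real.sin t ^ 2) / (k * (1 - k^2))
            + 1 / (k * Real.sqrt (1 - k^2 * Real.sin t ^ 2))))
          + ((∫ t in (0:ℝ)..(π/2),
              Real.sqrt (1 - k^2 * Real.sin t ^ 2) / (k * (1 - k^2)))
            - ∫ t in (0:ℝ)..(π/2),
              1 / (k * Real.sqrt (1 - k^2 * Real.sin t ^ 2))) := by
      rw [← intervalIntegral.integral_sub (hAcont.intervalIntegrable _ _)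
        (hBcont.intervalIntegrable _ _),
        ← intervalIntegral.integral_add (hGcont.intervalIntegrable _ _)
        (show IntervalIntegrable (fun t : ℝ => Real.sqrt (1 - k^2 * Real.sin t ^ 2) / (k * (1 - k^2)) - 1 / (k * Real.sqrt (1 - k^2 * Real.sin t ^ 2))) volume 0 (π/2) from (hAcont.sub hBcont).intervalIntegrable _ _)]
      congr 1
      funext t
      ring
    rw [hsplit, hG0, hA, hB, zero_add]
  exact key ▸ step1
end

section
/- The singular modulus for r = 2 is k₂ = √2 − 1, i.e., the unique k ∈ (0,1) with K(√(1−k²))/K(k) = √2 is k = √2 − 1. -/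
open Real Filter
open MeasureTheory Topology intervalIntegral

lemma quad_pos {p q : ℝ} (hp : 0 < p) (hq : 0 < q) (t : ℝ) :
    0 < p * Real.cos t ^ 2 + q * Real.sin t ^ 2 := by
  rcases eq_or_lt_of_le (sq_nonneg (Real.cos t)) with h | h
  · have hs : Real.sin t ^ 2 = 1 := by
      have := Real.sin_sq_add_cos_sq t; nlinarith
    nlinarith
  · nlinarith [mul_nonneg hq.le (sq_nonneg (Real.sin t))]

/-- integrand of the AGM-type integral -/
noncomputable def Kint (a b t : ℝ) : ℝ :=
  1 / Real.sqrt (a^2 * Real.cos t ^ 2 + b^2 * Real.sin t ^ 2)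

noncomputable def Iab (a b : ℝ) : ℝ := ∫ t in (0:ℝ)..(π/2), Kint a b t

/-- the Gauss substitution function -/
noncomputable def sfun (a b θ : ℝ) : ℝ :=
  (b * Real.sin θ ^ 2 - a * Real.cos θ ^ 2) / (a * Real.cos θ ^ 2 + b * Real.sin θ ^ 2)

noncomputable def phifun (a b θ : ℝ) : ℝ := Real.arcsin (sfun a b θ)

lemma trigquad_cont (p q : ℝ) :
    Continuous (fun t => p * Real.cos t ^ 2 + q * Real.sin t ^ 2) :=
  ((continuous_const.mul (Real.continuous_cos.pow 2)).add
    (continuous_const.mul (Real.continuous_sin.pow 2)))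

lemma Kint_cont {a b : ℝ} (ha : 0 < a) (hb : 0 < b) : Continuous (Kint a b) := by
  apply Continuous.div continuous_const (Real.continuous_sqrt.comp (trigquad_cont _ _))
  intro t
  exact (Real.sqrt_pos.mpr (quad_pos (pow_pos ha 2) (pow_pos hb 2) t)).ne'

lemma Kint_pos {a b : ℝ} (ha : 0 < a) (hb : 0 < b) (t : ℝ) : 0 < Kint a b t :=
  div_pos one_pos (Real.sqrt_pos.mpr (quad_pos (pow_pos ha 2) (pow_pos hb 2) t))

lemma sfun_cont {a b : ℝ} (ha : 0 < a) (hb : 0 < b) : Continuous (sfun a b) := by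
  apply Continuous.div ((continuous_const.mul (Real.continuous_sin.pow 2)).sub
    (continuous_const.mul (Real.continuous_cos.pow 2))) (trigquad_cont a b)
  exact fun t => (quad_pos ha hb t).ne'

lemma phifun_cont {a b : ℝ} (ha : 0 < a) (hb : 0 < b) : Continuous (phifun a b) :=
  Real.continuous_arcsin.comp (sfun_cont ha hb)

lemma phifun_zero {a b : ℝ} (ha : 0 < a) : phifun a b 0 = -(π/2) := by
  have hs0 : sfun a b 0 = -1 := by
    unfold sfun
    rw [Real.sin_zero, Real.cos_zero, div_eq_iff (by norm_num; positivity)]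
    ring
  rw [phifun, hs0, Real.arcsin_neg_one]

lemma phifun_pi_div_two {a b : ℝ} (hb : 0 < b) : phifun a b (π/2) = π/2 := by
  have hs1 : sfun a b (π/2) = 1 := by
    unfold sfun
    rw [Real.sin_pi_div_two, Real.cos_pi_div_two, div_eq_iff (by norm_num; positivity)]
    ring
  rw [phifun, hs1, Real.arcsin_one]

lemma phifun_hasDeriv {a b : ℝ} (ha : 0 < a) (hb : 0 < b) {x : ℝ}
    (hx0 : 0 < x) (hx1 : x < π/2) :
    HasDerivAt (phifun a b)
      (2 * Real.sqrt (a*b) / (a * Real.cos x ^ 2 + b * Real.sin x ^ 2)) x := by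
  have hS : 0 < Real.sin x := Real.sin_pos_of_pos_of_lt_pi hx0 (by linarith [pi_pos])
  have hC : 0 < Real.cos x := Real.cos_pos_of_mem_Ioo ⟨by linarith [pi_pos], hx1⟩
  have hD : 0 < a * Real.cos x ^ 2 + b * Real.sin x ^ 2 := quad_pos ha hb x
  have hab : Real.sqrt (a*b) ^ 2 = a * b := Real.sq_sqrt (by positivity)
  have habpos : 0 < Real.sqrt (a*b) := Real.sqrt_pos.mpr (by positivity)
  have hab2 : Real.sqrt a ^ 2 * Real.sqrt b ^ 2 = a * b := by
    rw [Real.sq_sqrt ha.le, Real.sq_sqrt hb.le]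
  have hNd : HasDerivAt (fun θ => b * Real.sin θ ^ 2 - a * Real.cos θ ^ 2)
      (b * (2 * Real.sin x ^ 1 * Real.cos x) - a * (2 * Real.cos x ^ 1 * (-Real.sin x))) x :=
    (((Real.hasDerivAt_sin x).pow 2).const_mul b).sub
      (((Real.hasDerivAt_cos x).pow 2).const_mul a)
  have hDd : HasDerivAt (fun θ => a * Real.cos θ ^ 2 + b * Real.sin θ ^ 2)
      (a * (2 * Real.cos x ^ 1 * (-Real.sin x)) + b * (2 * Real.sin x ^ 1 * Real.cos x)) x :=
    (((Real.hasDerivAt_cos x).pow 2).const_mul a).add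
      (((Real.hasDerivAt_sin x).pow 2).const_mul b)
  have hsd := hNd.div hDd hD.ne'
  set N := b * Real.sin x ^ 2 - a * Real.cos x ^ 2 with hNdef
  set D := a * Real.cos x ^ 2 + b * Real.sin x ^ 2 with hDdef
  have hlt : N / D < 1 := by
    rw [div_lt_one hD]
    nlinarith [mul_pos ha (pow_pos hC 2)]
  have hgt : -1 < N / D := by
    rw [lt_div_iff₀ hD]
    nlinarith [mul_pos hb (pow_pos hS 2)]
  have harc := Real.hasDerivAt_arcsin hgt.ne' hlt.ne
  have hcomp := harc.comp x hsd
  convert hcomp using 1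
  all_goals try rfl
  have hsqrt : Real.sqrt (1 - (N/D)^2) = 2 * Real.sqrt (a*b) * Real.sin x * Real.cos x / D := by
    rw [show 1 - (N/D)^2 = (2 * Real.sqrt (a*b) * Real.sin x * Real.cos x / D)^2 by
      rw [hNdef, hDdef]
      field_simp
      linear_combination (-(4:ℝ) * Real.sin x^2 * Real.cos x^2) * (Real.sq_sqrt (by positivity : (0:ℝ) ≤ b * a))]
    exact Real.sqrt_sq (by positivity)
  have key : (b * (2 * Real.sin x ^ 1 * Real.cos x) - a * (2 * Real.cos x ^ 1 * (-Real.sin x))) * D -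
      N * (a * (2 * Real.cos x ^ 1 * (-Real.sin x)) + b * (2 * Real.sin x ^ 1 * Real.cos x))
      = 4 * a * b * Real.sin x * Real.cos x := by
    rw [hNdef, hDdef]
    linear_combination (4 * a * b * Real.sin x * Real.cos x) * Real.sin_sq_add_cos_sq x
  rw [hsqrt, key, one_div_div, div_mul_div_comm,
    div_eq_div_iff hD.ne' (by positivity)]
  linear_combination (4 * Real.sin x * Real.cos x * D^2) * hab

lemma step1 {a b : ℝ} (ha : 0 < a) (hb : 0 < b) {c d : ℝ}
    (hc : 0 < c) (hcd : c ≤ d) (hd : d < π/2) :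
    (∫ θ in c..d, 2 * Kint a b θ)
      = ∫ t in (phifun a b c)..(phifun a b d), Kint ((a+b)/2) (Real.sqrt (a*b)) t := by
  have hA : 0 < (a+b)/2 := by positivity
  have hG : 0 < Real.sqrt (a*b) := Real.sqrt_pos.mpr (by positivity)
  have hG2 : Real.sqrt (a*b)^2 = a*b := Real.sq_sqrt (by positivity)
  have husub : Set.uIcc c d ⊆ Set.Ioo 0 (π/2) := by
    rw [Set.uIcc_of_le hcd]
    exact fun x hx => ⟨lt_of_lt_of_le hc hx.1, lt_of_le_of_lt hx.2 hd⟩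
  have hderiv : ∀ x ∈ Set.uIcc c d,
      HasDerivAt (phifun a b)
        (2 * Real.sqrt (a*b) / (a * Real.cos x ^2 + b * Real.sin x ^2)) x := by
    intro x hx
    obtain ⟨h1, h2⟩ := husub hx
    exact phifun_hasDeriv ha hb h1 h2
  have hdc : ContinuousOn (fun x => 2 * Real.sqrt (a*b) / (a * Real.cos x ^2 + b * Real.sin x ^2))
      (Set.uIcc c d) :=
    (Continuous.div continuous_const (trigquad_cont a b)
      (fun t => (quad_pos ha hb t).ne')).continuousOn
  rw [← intervalIntegral.integral_comp_smul_deriv hderiv hdc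
    (Kint_cont hA hG)]
  apply intervalIntegral.integral_congr
  intro x hx
  obtain ⟨h1, h2⟩ := husub hx
  have hS : 0 < Real.sin x := Real.sin_pos_of_pos_of_lt_pi h1 (by linarith [pi_pos])
  have hC : 0 < Real.cos x := Real.cos_pos_of_mem_Ioo ⟨by linarith [pi_pos], h2⟩
  have hD : 0 < a * Real.cos x ^2 + b * Real.sin x ^2 := quad_pos ha hb x
  have hsx_lt : sfun a b x < 1 := by
    rw [sfun, div_lt_one hD]
    nlinarith [mul_pos ha (pow_pos hC 2)]
  have hsx_gt : -1 < sfun a b x := by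
    rw [sfun, lt_div_iff₀ hD]
    nlinarith [mul_pos hb (pow_pos hS 2)]
  have hQ : 0 < Real.sqrt (a^2 * Real.cos x ^2 + b^2 * Real.sin x ^2) :=
    Real.sqrt_pos.mpr (quad_pos (pow_pos ha 2) (pow_pos hb 2) x)
  have hQ2 : Real.sqrt (a^2 * Real.cos x ^2 + b^2 * Real.sin x ^2) ^ 2
      = a^2 * Real.cos x ^2 + b^2 * Real.sin x ^2 :=
    Real.sq_sqrt (quad_pos (pow_pos ha 2) (pow_pos hb 2) x).le
  have hcosφ : Real.cos (phifun a b x) ^ 2 = 1 - sfun a b x ^ 2 := by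
    rw [phifun, Real.cos_arcsin]
    exact Real.sq_sqrt (by nlinarith)
  have hsinφ : Real.sin (phifun a b x) ^ 2 = sfun a b x ^ 2 := by
    rw [phifun, Real.sin_arcsin hsx_gt.le hsx_lt.le]
  have hval : ((a+b)/2)^2 * Real.cos (phifun a b x) ^2
        + Real.sqrt (a*b)^2 * Real.sin (phifun a b x) ^2
      = (Real.sqrt (a*b) * Real.sqrt (a^2 * Real.cos x ^2 + b^2 * Real.sin x ^2)
          / (a * Real.cos x ^2 + b * Real.sin x ^2))^2 := by
    rw [hcosφ, hsinφ, sfun, mul_div_assoc, mul_pow, hG2]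
    simp only [div_pow]
    rw [hQ2]
    rw [show (1:ℝ) = Real.sin x^2 + Real.cos x^2 from (Real.sin_sq_add_cos_sq x).symm]
    field_simp
    linear_combination ((a+b)^2 * (a * Real.cos x ^ 2 + b * Real.sin x ^ 2)^2 + 4*a*b*(a^2 * Real.cos x ^ 2 + b^2 * Real.sin x ^ 2)) * Real.sin_sq_add_cos_sq x
  have hgval : Kint ((a+b)/2) (Real.sqrt (a*b)) (phifun a b x)
      = (a * Real.cos x ^2 + b * Real.sin x ^2)
        / (Real.sqrt (a*b) * Real.sqrt (a^2 * Real.cos x ^2 + b^2 * Real.sin x ^2)) := by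
    rw [Kint, hval, Real.sqrt_sq (by positivity), one_div_div]
  simp only [smul_eq_mul, Function.comp_apply]
  rw [hgval, Kint]
  rw [div_mul_div_comm, mul_one_div,
    show 2 * Real.sqrt (a*b) * (a * Real.cos x ^2 + b * Real.sin x ^2)
      = ((a * Real.cos x ^2 + b * Real.sin x ^2) * Real.sqrt (a*b)) * 2 by ring,
    show (a * Real.cos x ^2 + b * Real.sin x ^2)
        * (Real.sqrt (a*b) * Real.sqrt (a^2 * Real.cos x ^2 + b^2 * Real.sin x ^2))
      = ((a * Real.cos x ^2 + b * Real.sin x ^2) * Real.sqrt (a*b))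
        * Real.sqrt (a^2 * Real.cos x ^2 + b^2 * Real.sin x ^2) by ring,
    mul_div_mul_left _ _ (by positivity)]

lemma Kint_even (p q x : ℝ) : Kint p q (-x) = Kint p q x := by
  rw [Kint, Kint, Real.cos_neg, Real.sin_neg]
  ring_nf

lemma Iab_agm {a b : ℝ} (ha : 0 < a) (hb : 0 < b) :
    Iab a b = Iab ((a+b)/2) (Real.sqrt (a*b)) := by
  have hA : 0 < (a+b)/2 := by positivity
  have hG : 0 < Real.sqrt (a*b) := Real.sqrt_pos.mpr (by positivity)
  have hhint : ∀ u v : ℝ, IntervalIntegrable (fun θ => 2 * Kint a b θ) volume u v :=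
    fun u v => (continuous_const.mul (Kint_cont ha hb)).intervalIntegrable u v
  have hgint : ∀ u v : ℝ, IntervalIntegrable (Kint ((a+b)/2) (Real.sqrt (a*b))) volume u v :=
    fun u v => (Kint_cont hA hG).intervalIntegrable u v
  set F : ℝ → ℝ := fun u => ∫ θ in (0:ℝ)..u, 2 * Kint a b θ with hF
  set P : ℝ → ℝ := fun u => ∫ t in (0:ℝ)..u, Kint ((a+b)/2) (Real.sqrt (a*b)) t with hP
  have hFc : Continuous F := intervalIntegral.continuous_primitive hhint 0
  have hPc : Continuous P := intervalIntegral.continuous_primitive hgint 0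
  set cseq : ℕ → ℝ := fun n => (π/2) / (n+2) with hcseq
  set dseq : ℕ → ℝ := fun n => π/2 - (π/2)/(n+2) with hdseq
  have hcpos : ∀ n : ℕ, 0 < cseq n := fun n => by positivity
  have hcd : ∀ n : ℕ, cseq n ≤ dseq n := by
    intro n
    have h1 : (π/2)/((n:ℝ)+2) ≤ (π/2)/2 := by
      apply div_le_div_of_nonneg_left (by positivity) (by norm_num)
      · norm_num
    rw [hcseq, hdseq]
    simp only
    have hpi := pi_pos
    linarith
  have hdlt : ∀ n : ℕ, dseq n < π/2 := by
    intro n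
    rw [hdseq]
    simp only
    have : (0:ℝ) < (π/2)/(n+2) := by positivity
    linarith
  have hclim : Tendsto cseq atTop (𝓝 0) := by
    apply Filter.Tendsto.div_atTop (tendsto_const_nhds)
    exact Filter.tendsto_atTop_add_const_right atTop 2 tendsto_natCast_atTop_atTop
  have hdlim : Tendsto dseq atTop (𝓝 (π/2)) := by
    have := (tendsto_const_nhds :
      Tendsto (fun _ : ℕ => π/2) atTop (𝓝 (π/2))).sub hclim
    simpa using this
  have key : ∀ n : ℕ, F (dseq n) - F (cseq n)
      = P (phifun a b (dseq n)) - P (phifun a b (cseq n)) := by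
    intro n
    rw [hF, hP]
    simp only
    rw [intervalIntegral.integral_interval_sub_left (hhint 0 (dseq n)) (hhint 0 (cseq n)),
      intervalIntegral.integral_interval_sub_left (hgint 0 _) (hgint 0 _)]
    exact step1 ha hb (hcpos n) (hcd n) (hdlt n)
  have hL1 : Tendsto (fun n => F (dseq n) - F (cseq n)) atTop (𝓝 (F (π/2) - F 0)) :=
    ((hFc.tendsto _).comp hdlim).sub ((hFc.tendsto _).comp hclim)
  have hL2 : Tendsto (fun n => P (phifun a b (dseq n)) - P (phifun a b (cseq n)))
      atTop (𝓝 (P (phifun a b (π/2)) - P (phifun a b 0))) :=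
    ((hPc.tendsto _).comp (((phifun_cont ha hb).tendsto _).comp hdlim)).sub
      ((hPc.tendsto _).comp (((phifun_cont ha hb).tendsto _).comp hclim))
  rw [phifun_pi_div_two hb, phifun_zero ha] at hL2
  have hmain : F (π/2) - F 0 = P (π/2) - P (-(π/2)) :=
    tendsto_nhds_unique ((tendsto_congr key).mp hL1) hL2
  have hF0 : F 0 = 0 := intervalIntegral.integral_same
  have hFpi : F (π/2) = 2 * Iab a b := by
    rw [hF]
    simp only
    rw [intervalIntegral.integral_const_mul, Iab]
  have hPpi : P (π/2) = Iab ((a+b)/2) (Real.sqrt (a*b)) := rfl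
  have hPneg : P (-(π/2)) = - Iab ((a+b)/2) (Real.sqrt (a*b)) := by
    rw [hP]
    simp only
    rw [intervalIntegral.integral_symm (-(π/2)) 0]
    have heven : (∫ t in (-(π/2))..(0:ℝ), Kint ((a+b)/2) (Real.sqrt (a*b)) t)
        = ∫ t in (0:ℝ)..(π/2), Kint ((a+b)/2) (Real.sqrt (a*b)) t := by
      have h1 : (∫ x in (0:ℝ)..(π/2), Kint ((a+b)/2) (Real.sqrt (a*b)) (-x))
          = ∫ x in (-(π/2))..(-(0:ℝ)), Kint ((a+b)/2) (Real.sqrt (a*b)) x :=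
        intervalIntegral.integral_comp_neg _
      rw [neg_zero] at h1
      rw [← h1]
      apply intervalIntegral.integral_congr
      intro t _
      exact Kint_even _ _ t
    rw [heven, Iab]
    
  rw [hF0, hFpi, hPpi, hPneg] at hmain
  linarith

lemma Iab_pos {a b : ℝ} (ha : 0 < a) (hb : 0 < b) : 0 < Iab a b := by
  apply intervalIntegral.intervalIntegral_pos_of_pos
  · exact ((Kint_cont ha hb).intervalIntegrable _ _)
  · intro x
    exact Kint_pos ha hb x
  · positivity

lemma Iab_homog {a b c : ℝ} (hc : 0 < c) : Iab (c*a) (c*b) = Iab a b / c := by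
  unfold Iab Kint
  rw [eq_div_iff hc.ne', ← intervalIntegral.integral_mul_const]
  apply intervalIntegral.integral_congr
  intro t _
  simp only
  have h : (c*a)^2 * Real.cos t ^ 2 + (c*b)^2 * Real.sin t ^ 2
      = c^2 * (a^2 * Real.cos t ^ 2 + b^2 * Real.sin t ^ 2) := by ring
  rw [h, Real.sqrt_mul (sq_nonneg c), Real.sqrt_sq hc.le]
  rcases eq_or_ne (Real.sqrt (a^2 * Real.cos t ^ 2 + b^2 * Real.sin t ^ 2)) 0 with h0 | h0
  · simp [h0]
  · field_simp

lemma ellipticK_eq_Iab {k : ℝ} (hk0 : 0 ≤ k) (hk1 : k < 1) :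
    ellipticK k = Iab 1 (Real.sqrt (1 - k^2)) := by
  unfold ellipticK Iab Kint
  apply intervalIntegral.integral_congr
  intro t _
  have h : (1:ℝ) - k^2 * Real.sin t ^ 2
      = 1^2 * Real.cos t ^ 2 + (Real.sqrt (1 - k^2))^2 * Real.sin t ^ 2 := by
    rw [Real.sq_sqrt (by nlinarith : (0:ℝ) ≤ 1 - k^2)]
    linear_combination -Real.sin_sq_add_cos_sq t
  simp only
  rw [h]

lemma onesub_pos {k : ℝ} (hk1 : -1 < k) (hk1' : k < 1) (t : ℝ) :
    0 < 1 - k^2 * Real.sin t ^ 2 := by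
  have h1 : k^2 < 1 := by nlinarith
  have h2 : Real.sin t ^ 2 ≤ 1 := Real.sin_sq_le_one t
  nlinarith [sq_nonneg (Real.sin t), sq_nonneg k]

lemma K_integrand_cont {k : ℝ} (hk1 : -1 < k) (hk1' : k < 1) :
    Continuous (fun t => 1 / Real.sqrt (1 - k^2 * Real.sin t ^ 2)) := by
  apply Continuous.div continuous_const
  · exact Real.continuous_sqrt.comp (by continuity)
  · intro t
    exact (Real.sqrt_pos.mpr (onesub_pos hk1 hk1' t)).ne'

lemma ellipticK_pos {k : ℝ} (hk1 : -1 < k) (hk1' : k < 1) : 0 < ellipticK k := by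
  apply intervalIntegral.intervalIntegral_pos_of_pos
  · exact ((K_integrand_cont hk1 hk1').intervalIntegrable _ _)
  · intro x
    exact div_pos one_pos (Real.sqrt_pos.mpr (onesub_pos hk1 hk1' x))
  · positivity

lemma ellipticK_strict_mono {k1 k2 : ℝ} (h0 : 0 ≤ k1) (h12 : k1 < k2) (h21 : k2 < 1) :
    ellipticK k1 < ellipticK k2 := by
  have hc1 : Continuous (fun t => 1 / Real.sqrt (1 - k1^2 * Real.sin t ^ 2)) :=
    K_integrand_cont (by linarith) (by linarith)
  have hc2 : Continuous (fun t => 1 / Real.sqrt (1 - k2^2 * Real.sin t ^ 2)) :=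
    K_integrand_cont (by linarith) (by linarith)
  apply intervalIntegral.integral_lt_integral_of_continuousOn_of_le_of_exists_lt
    (by positivity) hc1.continuousOn hc2.continuousOn
  · intro t _
    apply one_div_le_one_div_of_le
    · exact Real.sqrt_pos.mpr (onesub_pos (by linarith) (by linarith) t)
    · apply Real.sqrt_le_sqrt
      have h1 : k1^2 ≤ k2^2 := by nlinarith
      nlinarith [mul_le_mul_of_nonneg_right h1 (sq_nonneg (Real.sin t))]
  · refine ⟨π/4, ⟨by positivity, by linarith [pi_gt_three]⟩, ?_⟩
    apply one_div_lt_one_div_of_lt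
    · exact Real.sqrt_pos.mpr (onesub_pos (by linarith) (by linarith) (π/4))
    · apply Real.sqrt_lt_sqrt (le_of_lt (onesub_pos (by linarith) (by linarith) (π/4)))
      rw [Real.sin_pi_div_four]
      have h : (Real.sqrt 2 / 2)^2 = 1/2 := by
        rw [div_pow, Real.sq_sqrt (by norm_num : (0:ℝ) ≤ 2)]; norm_num
      rw [h]
      nlinarith

/-- the ratio `K(k')/K(k)` is strictly decreasing in `k` -/
lemma ratio_strict_anti {x y : ℝ} (hx : 0 < x) (hxy : x < y) (hy1 : y < 1) :
    ellipticK (Real.sqrt (1 - y^2)) / ellipticK y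
      < ellipticK (Real.sqrt (1 - x^2)) / ellipticK x := by
  have hx1 : x < 1 := lt_trans hxy hy1
  have hy0 : 0 < y := lt_trans hx hxy
  have hKx : 0 < ellipticK x := ellipticK_pos (by linarith) hx1
  have hKxy : ellipticK x < ellipticK y := ellipticK_strict_mono hx.le hxy hy1
  have hcx1 : Real.sqrt (1 - x^2) < 1 := by
    have h := Real.sqrt_lt_sqrt (by nlinarith : (0:ℝ) ≤ 1 - x^2) (by nlinarith : 1 - x^2 < 1)
    rwa [Real.sqrt_one] at h
  have hcyx : Real.sqrt (1 - y^2) < Real.sqrt (1 - x^2) :=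
    Real.sqrt_lt_sqrt (by nlinarith) (by nlinarith)
  have hKc : ellipticK (Real.sqrt (1 - y^2)) < ellipticK (Real.sqrt (1 - x^2)) :=
    ellipticK_strict_mono (Real.sqrt_nonneg _) hcyx hcx1
  have hKcx : 0 < ellipticK (Real.sqrt (1 - x^2)) :=
    ellipticK_pos (lt_of_lt_of_le neg_one_lt_zero (Real.sqrt_nonneg _)) hcx1
  exact div_lt_div₀ hKc hKxy.le hKcx.le hKx

theorem singular_modulus_two :
    (Real.sqrt 2 - 1 ∈ Set.Ioo (0:ℝ) 1) ∧
    ∀ k ∈ Set.Ioo (0:ℝ) 1,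
      (ellipticK (Real.sqrt (1 - k^2)) / ellipticK k = Real.sqrt 2 ↔ k = Real.sqrt 2 - 1) := by
  have hs2 : Real.sqrt 2 ^ 2 = 2 := Real.sq_sqrt (by norm_num)
  have hs2pos : 0 < Real.sqrt 2 := Real.sqrt_pos.mpr (by norm_num)
  have h1lt : 1 < Real.sqrt 2 := by nlinarith
  have hlt2 : Real.sqrt 2 < 2 := by nlinarith
  have hk0 : (0:ℝ) < Real.sqrt 2 - 1 := by linarith
  have hk1 : Real.sqrt 2 - 1 < 1 := by linarith
  -- the key special value
  have hcompl : 1 - (Real.sqrt 2 - 1)^2 = 2 * (Real.sqrt 2 - 1) := by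
    linear_combination -hs2
  have h2k01 : 2 * (Real.sqrt 2 - 1) < 1 := by nlinarith
  have h2k0pos : (0:ℝ) < 2 * (Real.sqrt 2 - 1) := by linarith
  have hval : ellipticK (Real.sqrt (1 - (Real.sqrt 2 - 1)^2))
      = Real.sqrt 2 * ellipticK (Real.sqrt 2 - 1) := by
    -- K(k') = Iab 1 k
    have hkp1 : Real.sqrt (1 - (Real.sqrt 2 - 1)^2) < 1 := by
      rw [hcompl]
      have h2 := Real.sqrt_lt_sqrt (le_of_lt h2k0pos) h2k01
      rwa [Real.sqrt_one] at h2
    have e1 : ellipticK (Real.sqrt (1 - (Real.sqrt 2 - 1)^2))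
        = Iab 1 (Real.sqrt (1 - (Real.sqrt (1 - (Real.sqrt 2 - 1)^2))^2)) :=
      ellipticK_eq_Iab (Real.sqrt_nonneg _) hkp1
    have e2 : Real.sqrt (1 - (Real.sqrt (1 - (Real.sqrt 2 - 1)^2))^2) = Real.sqrt 2 - 1 := by
      rw [Real.sq_sqrt (by nlinarith : (0:ℝ) ≤ 1 - (Real.sqrt 2 - 1)^2)]
      rw [show (1:ℝ) - (1 - (Real.sqrt 2 - 1)^2) = (Real.sqrt 2 - 1)^2 by ring]
      exact Real.sqrt_sq hk0.le
    -- Gauss AGM step : Iab 1 k = Iab ((1+k)/2) √k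
    have e3 : Iab 1 (Real.sqrt 2 - 1)
        = Iab ((1 + (Real.sqrt 2 - 1))/2) (Real.sqrt (1 * (Real.sqrt 2 - 1))) :=
      Iab_agm one_pos hk0
    -- homogeneity
    have hc2 : (0:ℝ) < Real.sqrt 2 / 2 := by positivity
    have e4 : Iab ((Real.sqrt 2 / 2) * 1)
          ((Real.sqrt 2 / 2) * Real.sqrt (2 * (Real.sqrt 2 - 1)))
        = Iab 1 (Real.sqrt (2 * (Real.sqrt 2 - 1))) / (Real.sqrt 2 / 2) :=
      Iab_homog hc2
    have e5 : (1 + (Real.sqrt 2 - 1))/2 = (Real.sqrt 2 / 2) * 1 := by ring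
    have e6 : Real.sqrt (1 * (Real.sqrt 2 - 1))
        = (Real.sqrt 2 / 2) * Real.sqrt (2 * (Real.sqrt 2 - 1)) := by
      rw [one_mul, div_mul_eq_mul_div, ← Real.sqrt_mul (by norm_num : (0:ℝ) ≤ 2)]
      rw [show (2:ℝ) * (2 * (Real.sqrt 2 - 1)) = 4 * (Real.sqrt 2 - 1) by ring,
        show (4:ℝ) * (Real.sqrt 2 - 1) = 2^2 * (Real.sqrt 2 - 1) by norm_num,
        Real.sqrt_mul (by norm_num : (0:ℝ) ≤ 2^2), Real.sqrt_sq (by norm_num : (0:ℝ) ≤ 2)]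
      ring
    have e7 : ellipticK (Real.sqrt 2 - 1) = Iab 1 (Real.sqrt (1 - (Real.sqrt 2 - 1)^2)) :=
      ellipticK_eq_Iab hk0.le hk1
    rw [e1, e2, e3, e5, e6, e4, e7, hcompl]
    rw [div_div_eq_mul_div, div_eq_iff hs2pos.ne']
    linear_combination (-(Iab 1 (Real.sqrt (2 * (Real.sqrt 2 - 1))))) * hs2
  refine ⟨⟨hk0, hk1⟩, ?_⟩
  rintro x ⟨hx0, hx1⟩
  have hKx : 0 < ellipticK x := ellipticK_pos (by linarith) hx1
  have hKk : 0 < ellipticK (Real.sqrt 2 - 1) := ellipticK_pos (by linarith) hk1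
  have hratk : ellipticK (Real.sqrt (1 - (Real.sqrt 2 - 1)^2)) / ellipticK (Real.sqrt 2 - 1)
      = Real.sqrt 2 := by
    rw [hval, mul_div_assoc, div_self hKk.ne', mul_one]
  constructor
  · intro hr
    rcases lt_trichotomy x (Real.sqrt 2 - 1) with h | h | h
    · have := ratio_strict_anti hx0 h hk1
      rw [hr, hratk] at this
      exact absurd this (lt_irrefl _)
    · exact h
    · have := ratio_strict_anti hk0 h hx1
      rw [hr, hratk] at this
      exact absurd this (lt_irrefl _)
  · rintro rfl
    exact hratk
end
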